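/- For every integer k with 1 ≤ k ≤ (n choose 2): n·log(k/n) − n ≤ log |{π ∈ S_n : d_KT(π, id) ≤ k}| ≤ n·log(1 + k/n) + n, where log denotes the natural logarithm (the upper bound also holds for k = 0). -/

import Mathlib

open Finset

/-- Kendall tau distance between two permutations of `Fin n`. -/
def dKT (n : ℕ) (π σ : Equiv.Perm (Fin n)) : ℕ :=
  (Finset.univ.filter fun q : Fin n × Fin n => σ q.1 < σ q.2 ∧ π q.2 < π q.1).card

def invCode (n : ℕ) (π : Equiv.Perm (Fin n)) (i : Fin n) : ℕ :=
  (univ.filter fun j : Fin n => i < j ∧ π j < π i).card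

lemma sum_invCode (n : ℕ) (π : Equiv.Perm (Fin n)) :
    ∑ i, invCode n π i = dKT n π 1 := by
  unfold dKT invCode
  rw [card_filter, Fintype.sum_prod_type]
  apply Finset.sum_congr rfl
  intro i _
  rw [card_filter]
  apply Finset.sum_congr rfl
  intro j _
  simp
  congr

lemma invCode_lt (n : ℕ) (π : Equiv.Perm (Fin n)) (i : Fin n) :
    invCode n π i < n - i.val := by
  have h1 : (univ.filter fun j : Fin n => i < j ∧ π j < π i) ⊆ Ioi i := by
    intro j hj
    rw [mem_filter] at hj
    exact mem_Ioi.2 hj.2.1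
  have := card_le_card h1
  rw [Fin.card_Ioi] at this
  unfold invCode
  have hi := i.isLt
  omega

lemma invCode_card_eq (n : ℕ) (π : Equiv.Perm (Fin n)) (i : Fin n) :
    invCode n π i = #((univ.filter fun j : Fin n => i ≤ j).image π ∩ Iio (π i)) := by
  have himg : (univ.filter fun j : Fin n => i ≤ j).image π ∩ Iio (π i)
      = (univ.filter fun j : Fin n => i < j ∧ π j < π i).image π := by
    ext v
    simp only [mem_inter, mem_image, mem_filter, mem_univ, true_and, mem_Iio]
    constructor
    · rintro ⟨⟨j, hij, rfl⟩, hv⟩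
      refine ⟨j, ⟨lt_of_le_of_ne hij ?_, hv⟩, rfl⟩
      rintro rfl
      exact lt_irrefl _ hv
    · rintro ⟨j, ⟨hij, hv⟩, rfl⟩
      exact ⟨⟨j, hij.le, rfl⟩, hv⟩
  rw [himg, Finset.card_image_of_injective _ π.injective]
  rfl


lemma lem_ord {n : ℕ} (s : Finset (Fin n)) (a b : Fin n) (ha : a ∈ s) (hb : b ∈ s)
    (h : #(s ∩ Iio a) = #(s ∩ Iio b)) : a = b := by
  have key : ∀ x y : Fin n, x ∈ s → x < y → #(s ∩ Iio x) < #(s ∩ Iio y) := by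
    intro x y hx hxy
    apply card_lt_card
    constructor
    · exact inter_subset_inter (Finset.Subset.refl s) (Iio_subset_Iio hxy.le)
    · intro hsub
      have := hsub (mem_inter.2 ⟨hx, mem_Iio.2 hxy⟩)
      rw [mem_inter, mem_Iio] at this
      exact lt_irrefl x this.2
  rcases lt_trichotomy a b with h'|h'|h'
  · exact absurd h (Nat.ne_of_lt (key a b ha h'))
  · exact h'
  · exact absurd h.symm (Nat.ne_of_lt (key b a hb h'))

lemma invCode_injective (n : ℕ) : Function.Injective (invCode n) := by
  intro π τ h
  have key : ∀ N (i : Fin n), i.val ≤ N → π i = τ i := by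
    intro N
    induction N using Nat.strong_induction_on with
    | _ N ih =>
      intro i hiN
      have hprev : ∀ j : Fin n, j < i → π j = τ j := by
        intro j hj
        exact ih j.val (lt_of_lt_of_le (Fin.lt_def.1 hj) hiN) j le_rfl
      have hsplit : ∀ ρ : Equiv.Perm (Fin n),
          (univ.filter fun j : Fin n => i ≤ j).image ρ = univ \ (Iio i).image ρ := by
        intro ρ
        have h1 : (univ.filter fun j : Fin n => i ≤ j) = univ \ Iio i := by
          ext j; simp [not_lt]
        rw [h1, Finset.image_sdiff _ _ ρ.injective]
        congr 1
        exact Finset.image_univ_equiv ρ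
      have hV : (univ.filter fun j : Fin n => i ≤ j).image π
          = (univ.filter fun j : Fin n => i ≤ j).image τ := by
        rw [hsplit π, hsplit τ]
        congr 1
        exact Finset.image_congr (fun j hj => hprev j (mem_Iio.1 hj))
      have h1 := invCode_card_eq n π i
      have h2 := invCode_card_eq n τ i
      have heq : invCode n π i = invCode n τ i := congrFun h i
      apply lem_ord ((univ.filter fun j : Fin n => i ≤ j).image π) (π i) (τ i)
      · exact mem_image_of_mem π (mem_filter.2 ⟨mem_univ i, le_rfl⟩)
      · rw [hV]; exact mem_image_of_mem τ (mem_filter.2 ⟨mem_univ i, le_rfl⟩)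
      · rw [← h1, hV, ← h2]
        exact heq
  apply Equiv.ext
  intro i
  exact key i.val i le_rfl

lemma sum_Iic_inj {n : ℕ} (f g : Fin n → ℕ)
    (h : ∀ i, ∑ j ∈ Iic i, f j = ∑ j ∈ Iic i, g j) : f = g := by
  funext i
  have key : ∀ N (i : Fin n), i.val ≤ N → f i = g i := by
    intro N
    induction N using Nat.strong_induction_on with
    | _ N ih =>
      intro i hiN
      have hprev : ∑ j ∈ Iio i, f j = ∑ j ∈ Iio i, g j := by
        apply Finset.sum_congr rfl
        intro j hj
        exact ih j.val (lt_of_lt_of_le (Fin.lt_def.1 (mem_Iio.1 hj)) hiN) j le_rfl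
      have hi := h i
      rw [← Iio_insert, Finset.sum_insert (by simp), Finset.sum_insert (by simp)] at hi
      omega
  exact key i.val i le_rfl

lemma card_le_choose (n k : ℕ) :
    #(univ.filter fun π : Equiv.Perm (Fin n) => dKT n π 1 ≤ k) ≤ (n + k).choose n := by
  classical
  set g : Equiv.Perm (Fin n) → Fin n → Fin (n + k) := fun π i =>
    ⟨min (∑ j ∈ Iic i, invCode n π j) k + i.val,
      by have := i.isLt; omega⟩ with hg
  have hmono : ∀ π, StrictMono (g π) := by
    intro π a b hab
    have hs : ∑ j ∈ Iic a, invCode n π j ≤ ∑ j ∈ Iic b, invCode n π j :=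
      Finset.sum_le_sum_of_subset (Iic_subset_Iic.2 hab.le)
    have hv : a.val < b.val := Fin.lt_def.1 hab
    rw [Fin.lt_def]
    simp only [g]
    omega
  set T : Equiv.Perm (Fin n) → Finset (Fin (n + k)) := fun π => (univ.image (g π)) with hT
  have hcardT : ∀ π, #(T π) = n := by
    intro π
    rw [hT]
    rw [Finset.card_image_of_injective _ (hmono π).injective, card_univ, Fintype.card_fin]
  have hmem : ∀ π, ∀ x : Fin n, g π x ∈ T π := fun π x => mem_image_of_mem _ (mem_univ x)
  have hSk : ∀ π : Equiv.Perm (Fin n), dKT n π 1 ≤ k → ∀ i : Fin n,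
      ∑ j ∈ Iic i, invCode n π j ≤ k := by
    intro π hπ i
    calc ∑ j ∈ Iic i, invCode n π j ≤ ∑ j, invCode n π j :=
          Finset.sum_le_sum_of_subset (subset_univ _)
      _ = dKT n π 1 := sum_invCode n π
      _ ≤ k := hπ
  have key := Finset.card_le_card_of_injOn (s := univ.filter fun π : Equiv.Perm (Fin n) => dKT n π 1 ≤ k) (t := powersetCard n (univ : Finset (Fin (n+k)))) T
    (fun π _ => by
      rw [mem_coe, mem_powersetCard]
      exact ⟨subset_univ _, hcardT π⟩)
    (by
      intro π hπ π' hπ' hTeq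
      have hπk : dKT n π 1 ≤ k := by
        have := hπ; simp only [coe_filter, Set.mem_setOf_eq, mem_univ, true_and] at this
        exact this
      have hπ'k : dKT n π' 1 ≤ k := by
        have := hπ'; simp only [coe_filter, Set.mem_setOf_eq, mem_univ, true_and] at this
        exact this
      have hgeq : g π = g π' := by
        rw [Finset.orderEmbOfFin_unique (hcardT π) (hmem π) (hmono π)]
        have hmem' : ∀ x : Fin n, g π' x ∈ T π := by
          rw [hTeq]; exact hmem π'
        rw [Finset.orderEmbOfFin_unique (hcardT π) hmem' (hmono π')]
      have hsums : ∀ i : Fin n, ∑ j ∈ Iic i, invCode n π j = ∑ j ∈ Iic i, invCode n π' j := by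
        intro i
        have := congrFun hgeq i
        rw [Fin.ext_iff] at this
        simp only [g] at this
        have h1 := hSk π hπk i
        have h2 := hSk π' hπ'k i
        omega
      exact invCode_injective n (sum_Iic_inj _ _ hsums))
  calc #(univ.filter fun π : Equiv.Perm (Fin n) => dKT n π 1 ≤ k)
      ≤ #(powersetCard n (univ : Finset (Fin (n+k)))) := key
    _ = (n + k).choose n := by rw [card_powersetCard, card_univ, Fintype.card_fin]

lemma prod_range_id_succ (n : ℕ) : ∏ i ∈ range n, (i + 1) = Nat.factorial n := by
  induction n with
  | zero => rfl
  | succ n ih => rw [prod_range_succ, ih, Nat.factorial_succ]; ring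

lemma card_piFinset_range (n : ℕ) :
    #(Fintype.piFinset (fun i : Fin n => Finset.range (n - i.val))) = Nat.factorial n := by
  rw [Fintype.card_piFinset]
  simp only [card_range]
  rw [Fin.prod_univ_eq_prod_range (fun i => n - i) n]
  have h2 : ∏ i ∈ range n, (n - i) = ∏ j ∈ range n, ((n - 1 - j) + 1) := by
    apply Finset.prod_congr rfl
    intro j hj
    rw [mem_range] at hj
    omega
  rw [h2, prod_range_reflect (fun j => j + 1) n, prod_range_id_succ]

lemma invCode_surj (n : ℕ) :
    ∀ c ∈ Fintype.piFinset (fun i : Fin n => Finset.range (n - i.val)),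
      ∃ π : Equiv.Perm (Fin n), invCode n π = c := by
  intro c hc
  have h := Finset.surj_on_of_inj_on_of_card_le
    (s := (univ : Finset (Equiv.Perm (Fin n))))
    (t := Fintype.piFinset (fun i : Fin n => Finset.range (n - i.val)))
    (fun π _ => invCode n π)
    (fun π _ => by
      rw [Fintype.mem_piFinset]
      intro i
      rw [mem_range]
      exact invCode_lt n π i)
    (fun π π' _ _ hpp => invCode_injective n hpp)
    (by rw [card_piFinset_range, card_univ, Fintype.card_perm, Fintype.card_fin])
  obtain ⟨π, _, hπ⟩ := h c hc
  exact ⟨π, hπ.symm⟩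

lemma prod_le_card (n k : ℕ) (m : ℕ) (hm : n * m ≤ k) :
    ∏ i : Fin n, min (n - i.val) (m + 1)
      ≤ #(univ.filter fun π : Equiv.Perm (Fin n) => dKT n π 1 ≤ k) := by
  classical
  have hsub : Fintype.piFinset (fun i : Fin n => Finset.range (min (n - i.val) (m + 1)))
      ⊆ Fintype.piFinset (fun i : Fin n => Finset.range (n - i.val)) := by
    intro c hc
    rw [Fintype.mem_piFinset] at hc ⊢
    intro i
    have := hc i
    rw [mem_range] at this ⊢
    omega
  have hsurj : Set.SurjOn (invCode n)
      ↑(univ.filter fun π : Equiv.Perm (Fin n) => dKT n π 1 ≤ k)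
      ↑(Fintype.piFinset (fun i : Fin n => Finset.range (min (n - i.val) (m + 1)))) := by
    intro c hc
    obtain ⟨π, hπ⟩ := invCode_surj n c (hsub (Finset.mem_coe.1 hc))
    refine ⟨π, ?_, hπ⟩
    simp only [Finset.coe_filter, Set.mem_setOf_eq, mem_univ, true_and]
    rw [← sum_invCode n π]
    calc ∑ i, invCode n π i ≤ ∑ _i : Fin n, m := by
          apply Finset.sum_le_sum
          intro i _
          have hci : c i ∈ range (min (n - i.val) (m+1)) := by
            have := hc
            rw [Finset.mem_coe, Fintype.mem_piFinset] at this
            exact this i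
          rw [mem_range] at hci
          rw [hπ]
          omega
      _ = n * m := by rw [Finset.sum_const, card_univ, Fintype.card_fin, smul_eq_mul]
      _ ≤ k := hm
  have := Finset.card_le_card_of_surjOn _ hsurj
  calc ∏ i : Fin n, min (n - i.val) (m + 1)
      = #(Fintype.piFinset (fun i : Fin n => Finset.range (min (n - i.val) (m + 1)))) := by
        rw [Fintype.card_piFinset]; simp
    _ ≤ _ := this

lemma prod_range_id_succ' (n : ℕ) : ∏ i ∈ range n, (i + 1) = Nat.factorial n := by
  induction n with
  | zero => rfl
  | succ n ih => rw [prod_range_succ, ih, Nat.factorial_succ]; ring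

lemma pow_le_exp_mul_factorial : ∀ j : ℕ, (j : ℝ) ^ j ≤ Real.exp 1 ^ j * (Nat.factorial j) := by
  intro j
  induction j with
  | zero => simp
  | succ j ih =>
    have hstep : ((j : ℝ) + 1) ^ j ≤ Real.exp 1 * (j : ℝ) ^ j := by
      rcases Nat.eq_zero_or_pos j with rfl | hj
      · simpa using Real.one_le_exp (le_refl 1).trans_eq' (by norm_num)
      · have hjR : (0 : ℝ) < j := by exact_mod_cast hj
        have h1 : (j : ℝ) + 1 = (1 + 1 / j) * j := by field_simp
        rw [h1, mul_pow]
        have h2 : (1 : ℝ) + 1 / j ≤ Real.exp (1 / j) := by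
          have := Real.add_one_le_exp (1 / (j : ℝ)); linarith
        have h3 : ((1 : ℝ) + 1 / j) ^ j ≤ (Real.exp (1 / j)) ^ j := by
          apply pow_le_pow_left₀ (by positivity) h2
        have h4 : (Real.exp (1 / j)) ^ j = Real.exp 1 := by
          rw [← Real.exp_nat_mul]
          congr 1
          field_simp
        rw [h4] at h3
        exact mul_le_mul_of_nonneg_right h3 (by positivity)
    have hj0 : (0:ℝ) ≤ (j:ℝ) + 1 := by positivity
    push_cast
    calc ((j : ℝ) + 1) ^ (j + 1) = ((j:ℝ) + 1) * ((j:ℝ) + 1) ^ j := by ring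
      _ ≤ ((j:ℝ) + 1) * (Real.exp 1 * (j:ℝ)^j) := by
          apply mul_le_mul_of_nonneg_left hstep hj0
      _ ≤ ((j:ℝ) + 1) * (Real.exp 1 * (Real.exp 1 ^ j * (Nat.factorial j))) := by
          apply mul_le_mul_of_nonneg_left _ hj0
          apply mul_le_mul_of_nonneg_left ih (Real.exp_pos 1).le
      _ = Real.exp 1 ^ (j+1) * (((j:ℝ)+1) * (Nat.factorial j)) := by ring
      _ = Real.exp 1 ^ (j+1) * (Nat.factorial (j+1)) := by
          rw [Nat.factorial_succ]; push_cast; ring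

lemma prod_min_eq (m n : ℕ) (h : m + 1 ≤ n) :
    ∏ i : Fin n, min (n - i.val) (m + 1)
      = Nat.factorial (m + 1) * (m + 1) ^ (n - (m + 1)) := by
  have key : ∀ N, m + 1 ≤ N → ∏ j ∈ range N, min (j + 1) (m + 1)
      = Nat.factorial (m + 1) * (m + 1) ^ (N - (m + 1)) := by
    intro N hN
    induction N, hN using Nat.le_induction with
    | base =>
      rw [Nat.sub_self, pow_zero, mul_one, ← prod_range_id_succ' (m+1)]
      apply Finset.prod_congr rfl
      intro j hj
      rw [mem_range] at hj
      omega
    | succ N hN ih =>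
      rw [prod_range_succ, ih, min_eq_right (by omega)]
      have : N + 1 - (m + 1) = (N - (m + 1)) + 1 := by omega
      rw [this, pow_succ, mul_assoc]
  rw [Fin.prod_univ_eq_prod_range (fun i => min (n - i) (m + 1)) n]
  have h2 : ∏ i ∈ range n, min (n - i) (m + 1)
      = ∏ j ∈ range n, min ((n - 1 - j) + 1) (m + 1) := by
    apply Finset.prod_congr rfl
    intro j hj
    rw [mem_range] at hj
    congr 1
    omega
  rw [h2, prod_range_reflect (fun j => min (j + 1) (m + 1)) n, key n h]

lemma one_mem_filter_dKT (n k : ℕ) :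
    (1 : Equiv.Perm (Fin n)) ∈ univ.filter fun π : Equiv.Perm (Fin n) => dKT n π 1 ≤ k := by
  refine mem_filter.2 ⟨mem_univ _, ?_⟩
  have h0 : dKT n 1 1 = 0 := by
    unfold dKT
    rw [Finset.card_eq_zero]
    apply Finset.filter_false_of_mem
    rintro q _ ⟨h1, h2⟩
    exact absurd (h1.trans h2) (lt_irrefl _)
  omega


/-- **Lemma 1 (number of permutations with at most `k` inversions).**
For `1 ≤ k ≤ (n choose 2)`,
`n log(k/n) - n ≤ log #{π : d_KT(π, id) ≤ k} ≤ n log(1 + k/n) + n`,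
and the upper bound also holds for `k = 0`. -/
theorem card_perms_few_inversions (n k : ℕ) :
    (k ≤ n.choose 2 →
      Real.log ((Finset.univ.filter fun π : Equiv.Perm (Fin n) => dKT n π 1 ≤ k).card) ≤
        (n : ℝ) * Real.log (1 + (k : ℝ) / (n : ℝ)) + n) ∧
    (1 ≤ k → k ≤ n.choose 2 →
      (n : ℝ) * Real.log ((k : ℝ) / (n : ℝ)) - n ≤
        Real.log ((Finset.univ.filter fun π : Equiv.Perm (Fin n) => dKT n π 1 ≤ k).card)) := by
  set N := (Finset.univ.filter fun π : Equiv.Perm (Fin n) => dKT n π 1 ≤ k).card with hNdef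
  have hN1 : 1 ≤ N := Finset.card_pos.2 ⟨1, one_mem_filter_dKT n k⟩
  have hNpos : (0:ℝ) < (N:ℝ) := by exact_mod_cast hN1
  constructor
  · intro _
    -- upper bound
    have hfact : (0:ℝ) < (Nat.factorial n : ℝ) := by
      exact_mod_cast Nat.factorial_pos n
    have hNchoose : (N:ℝ) ≤ ((n+k).choose n : ℝ) := by
      exact_mod_cast card_le_choose n k
    have hchoose : ((n+k).choose n : ℝ) ≤ ((n+k:ℕ):ℝ)^n / (Nat.factorial n : ℝ) :=
      Nat.choose_le_pow_div n (n+k)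
    have hpow : ((n+k:ℕ):ℝ)^n ≤ (1 + (k:ℝ)/n)^n * (n:ℝ)^n := by
      rcases Nat.eq_zero_or_pos n with rfl | hn
      · simp
      · have hnR : (0:ℝ) < n := by exact_mod_cast hn
        have : ((n+k:ℕ):ℝ) = (1 + (k:ℝ)/n) * n := by
          push_cast; field_simp
        rw [this, mul_pow]
    have hnn : (n:ℝ)^n ≤ Real.exp 1 ^ n * (Nat.factorial n : ℝ) :=
      pow_le_exp_mul_factorial n
    have hbase : (0:ℝ) ≤ 1 + (k:ℝ)/n := by positivity
    have hA : (N:ℝ) * (Nat.factorial n : ℝ) ≤ ((n+k:ℕ):ℝ)^n := by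
      calc (N:ℝ) * (Nat.factorial n : ℝ)
          ≤ ((n+k).choose n : ℝ) * (Nat.factorial n : ℝ) :=
            mul_le_mul_of_nonneg_right hNchoose hfact.le
        _ ≤ ((n+k:ℕ):ℝ)^n := (le_div_iff₀ hfact).1 hchoose
    have hB : ((n+k:ℕ):ℝ)^n ≤ ((1 + (k:ℝ)/n)^n * Real.exp 1 ^ n) * (Nat.factorial n : ℝ) := by
      calc ((n+k:ℕ):ℝ)^n ≤ (1 + (k:ℝ)/n)^n * (n:ℝ)^n := hpow
        _ ≤ (1 + (k:ℝ)/n)^n * (Real.exp 1 ^ n * (Nat.factorial n : ℝ)) :=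
            mul_le_mul_of_nonneg_left hnn (pow_nonneg hbase n)
        _ = ((1 + (k:ℝ)/n)^n * Real.exp 1 ^ n) * (Nat.factorial n : ℝ) := by ring
    have hfin : (N:ℝ) ≤ (1 + (k:ℝ)/n)^n * Real.exp 1 ^ n :=
      (mul_le_mul_iff_of_pos_right hfact).1 (hA.trans hB)
    have hlog := Real.log_le_log hNpos hfin
    rw [Real.log_mul (by positivity) (by positivity), Real.log_pow, Real.log_pow,
      Real.log_exp] at hlog
    calc Real.log (N:ℝ) ≤ (n:ℝ) * Real.log (1 + (k:ℝ)/n) + (n:ℝ) * 1 := hlog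
      _ = (n:ℝ) * Real.log (1 + (k:ℝ)/n) + n := by ring
  · intro hk1 hk2
    -- lower bound
    have hn2 : 2 ≤ n := by
      by_contra hn
      push_neg at hn
      rw [Nat.choose_eq_zero_of_lt (by omega)] at hk2
      omega
    have hn0 : 0 < n := by omega
    set m := k / n with hmdef
    have hmn : m + 1 ≤ n := by
      have h2k : 2 * k ≤ n * (n-1) := by
        have h := hk2
        rw [Nat.choose_two_right] at h
        omega
      have hsq : n * (n-1) + n = n * n := by
        obtain ⟨n', rfl⟩ : ∃ n', n = n' + 1 := ⟨n-1, by omega⟩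
        simp
        ring
      have hkn2 : k < n * n := by omega
      have : m < n := by
        rw [hmdef]
        exact (Nat.div_lt_iff_lt_mul hn0).2 hkn2
      omega
    have hklt : k < n * (m + 1) := by
      have h1 := Nat.div_add_mod k n
      have h2 := Nat.mod_lt k hn0
      have h3 : n * (m + 1) = n * (k / n) + n := by rw [hmdef]; ring
      omega
    have hnR : (0:ℝ) < n := by exact_mod_cast hn0
    have hkR : (0:ℝ) < k := by exact_mod_cast hk1
    have hkn : (k:ℝ)/n ≤ (m:ℝ)+1 := by
      rw [div_le_iff₀ hnR]
      calc (k:ℝ) ≤ ((n * (m+1) : ℕ) : ℝ) := by exact_mod_cast hklt.le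
        _ = ((m:ℝ)+1) * n := by push_cast; ring
    have hPcard : (Nat.factorial (m+1) * (m+1)^(n-(m+1)) : ℕ) ≤ N := by
      rw [← prod_min_eq m n hmn]
      apply prod_le_card n k m
      calc n * m = n * (k / n) := by rw [hmdef]
        _ ≤ k := Nat.mul_div_le k n
    have hmain : ((k:ℝ)/n)^n ≤ Real.exp 1 ^ n * (N:ℝ) := by
      have hcast : ((m+1:ℕ):ℝ) = (m:ℝ)+1 := by push_cast; ring
      calc ((k:ℝ)/n)^n ≤ ((m:ℝ)+1)^n := by
            apply pow_le_pow_left₀ (by positivity) hkn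
        _ = ((m:ℝ)+1)^(m+1) * ((m:ℝ)+1)^(n-(m+1)) := by
            rw [← pow_add]
            congr 1
            omega
        _ ≤ (Real.exp 1 ^ (m+1) * (Nat.factorial (m+1) : ℝ)) * ((m:ℝ)+1)^(n-(m+1)) := by
            apply mul_le_mul_of_nonneg_right _ (by positivity)
            have := pow_le_exp_mul_factorial (m+1)
            rw [hcast] at this
            exact this
        _ ≤ (Real.exp 1 ^ n * (Nat.factorial (m+1) : ℝ)) * ((m:ℝ)+1)^(n-(m+1)) := by
            apply mul_le_mul_of_nonneg_right _ (by positivity)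
            apply mul_le_mul_of_nonneg_right _ (by positivity)
            exact pow_le_pow_right₀ (Real.one_le_exp (by norm_num)) hmn
        _ = Real.exp 1 ^ n * ((Nat.factorial (m+1) * (m+1)^(n-(m+1)) : ℕ) : ℝ) := by
            push_cast; ring
        _ ≤ Real.exp 1 ^ n * (N:ℝ) := by
            apply mul_le_mul_of_nonneg_left _ (by positivity)
            exact_mod_cast hPcard
    have hlog := Real.log_le_log (by positivity) hmain
    rw [Real.log_pow, Real.log_mul (by positivity) (ne_of_gt hNpos), Real.log_pow,
      Real.log_exp] at hlog
    have : (n:ℝ) * Real.log ((k:ℝ)/n) ≤ (n:ℝ) * 1 + Real.log (N:ℝ) := hlog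
    linarith
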